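/- arXiv:2603.16756 — 2 statements merged into one kernel-verified Lean document; each statement's English description precedes it below -/
import Mathlib

section
/- Let n ≥ 1 and let Σ₀ be a real symmetric positive definite n×n matrix whose eigenvalues all lie in [λmin, λmax] with 0 < λmin ≤ λmax < ∞. Let (Δ_k)_{k∈ℕ} be a sequence of nonzero real symmetric positive semidefinite n×n matrices such that Σ₀ − Δ_k is positive definite for every k, the spectral norm ‖Σ₀^{-1/2} Δ_k Σ₀^{-1/2}‖₂ tends to 0 as k → ∞, and the ratio tr(Σ₀⁻¹ Δ_k) / tr(Δ_k) converges to some real number ρ. Define U_k := (1/2)(log det Σ₀ − log det(Σ₀ − Δ_k)) and ΔIMSPE_k := tr(Δ_k)/n. Then U_k / ΔIMSPE_k converges to the constant C := (n/2)·ρ, and this constant satisfies n/(2 λmax) ≤ C ≤ n/(2 λmin). -/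
open Matrix Filter

/-- The spectral norm (largest singular value) of a real square matrix,
realized as the operator norm of the induced map on Euclidean space. -/
noncomputable def specNorm {n : ℕ} (B : Matrix (Fin n) (Fin n) ℝ) : ℝ :=
  ‖(Matrix.toEuclideanLin B).toContinuousLinearMap‖

open scoped ComplexOrder in
/-- The square root of a positive semidefinite matrix, as defined in the older Mathlib
(`Matrix.PosSemidef.sqrt`, removed since). -/
noncomputable def Matrix.PosSemidef.sqrt {n : Type*} [Fintype n] [DecidableEq n]
    {𝕜 : Type*} [RCLike 𝕜] {A : Matrix n n 𝕜} (hA : A.PosSemidef) : Matrix n n 𝕜 :=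
  hA.1.eigenvectorUnitary.1 * diagonal ((↑) ∘ (√·) ∘ hA.1.eigenvalues) *
  (star hA.1.eigenvectorUnitary : Matrix n n 𝕜)

variable {n : ℕ}

lemma Matrix.PosSemidef.sqrt_mul_self {A : Matrix (Fin n) (Fin n) ℝ} (hA : A.PosSemidef) :
    hA.sqrt * hA.sqrt = A := by
  unfold Matrix.PosSemidef.sqrt
  have hU := Unitary.coe_star_mul_self hA.1.eigenvectorUnitary
  have key : ∀ D₁ D₂ : Matrix (Fin n) (Fin n) ℝ,
      hA.1.eigenvectorUnitary.1 * D₁ * star hA.1.eigenvectorUnitary.1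
        * (hA.1.eigenvectorUnitary.1 * D₂ * star hA.1.eigenvectorUnitary.1)
      = hA.1.eigenvectorUnitary.1 * (D₁ * D₂) * star hA.1.eigenvectorUnitary.1 := by
    intro D₁ D₂
    simp only [Matrix.mul_assoc]
    rw [← Matrix.mul_assoc (star hA.1.eigenvectorUnitary.1) hA.1.eigenvectorUnitary.1, hU,
      Matrix.one_mul]
  conv_rhs => rw [hA.1.spectral_theorem, Unitary.conjStarAlgAut_apply]
  rw [key, Matrix.diagonal_mul_diagonal]
  congr 2
  ext i
  simp [Matrix.diagonal_apply, Real.mul_self_sqrt (hA.eigenvalues_nonneg i)]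

lemma Matrix.PosSemidef.posSemidef_sqrt {A : Matrix (Fin n) (Fin n) ℝ} (hA : A.PosSemidef) :
    hA.sqrt.PosSemidef := by
  unfold Matrix.PosSemidef.sqrt
  have := (Matrix.posSemidef_diagonal_iff.mpr
    (fun i => by simp [Real.sqrt_nonneg] : ∀ i,
      (0 : ℝ) ≤ (((↑) ∘ (√·) ∘ hA.1.eigenvalues : Fin n → ℝ) i))).mul_mul_conjTranspose_same
    hA.1.eigenvectorUnitary.1
  rwa [← Matrix.star_eq_conjTranspose] at this

lemma trace_eq_sum_eig {A : Matrix (Fin n) (Fin n) ℝ} (hA : A.IsHermitian) :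
    A.trace = ∑ i, hA.eigenvalues i := by
  conv_lhs => rw [hA.spectral_theorem, Unitary.conjStarAlgAut_apply]
  rw [Matrix.trace_mul_cycle,
    Unitary.coe_star_mul_self hA.eigenvectorUnitary, Matrix.one_mul, Matrix.trace_diagonal]
  simp

lemma eig_le_specNorm {A : Matrix (Fin n) (Fin n) ℝ} (hA : A.IsHermitian) (i : Fin n) :
    |hA.eigenvalues i| ≤ specNorm A := by
  have hv := hA.mulVec_eigenvectorBasis i
  have hnv : ‖hA.eigenvectorBasis i‖ = 1 := hA.eigenvectorBasis.orthonormal.1 i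
  have h1 : (Matrix.toEuclideanLin A).toContinuousLinearMap (hA.eigenvectorBasis i)
      = hA.eigenvalues i • hA.eigenvectorBasis i := by
    apply PiLp.ext
    intro j
    have := congrFun hv j
    simpa [Matrix.toEuclideanLin_apply] using this
  have h2 := (Matrix.toEuclideanLin A).toContinuousLinearMap.le_opNorm (hA.eigenvectorBasis i)
  rw [h1, norm_smul, hnv, mul_one, mul_one, Real.norm_eq_abs] at h2
  exact h2

lemma trace_psd_nonneg {A : Matrix (Fin n) (Fin n) ℝ} (hA : A.PosSemidef) : 0 ≤ A.trace := by
  rw [trace_eq_sum_eig hA.1]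
  exact Finset.sum_nonneg fun i _ => hA.eigenvalues_nonneg i

lemma trace_mul_psd_nonneg {A B : Matrix (Fin n) (Fin n) ℝ}
    (hA : A.PosSemidef) (hB : B.PosSemidef) : 0 ≤ (A * B).trace := by
  have h1 : A * B = A * hB.sqrt * hB.sqrt := by rw [Matrix.mul_assoc, hB.sqrt_mul_self]
  rw [h1, Matrix.trace_mul_cycle]
  have h2 : (hB.sqrt * A * hB.sqrt).PosSemidef := by
    have := hA.conjTranspose_mul_mul_same hB.sqrt
    rwa [hB.posSemidef_sqrt.1.eq] at this
  exact trace_psd_nonneg h2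

lemma trace_pos_of_ne_zero {A : Matrix (Fin n) (Fin n) ℝ} (hA : A.PosSemidef) (h : A ≠ 0) :
    0 < A.trace := by
  rcases (trace_psd_nonneg hA).lt_or_eq with h1 | h1
  · exact h1
  · exfalso; apply h
    have hsum : ∑ i, hA.1.eigenvalues i = 0 := by rw [← trace_eq_sum_eig hA.1, ← h1]
    have hz : ∀ i ∈ Finset.univ, hA.1.eigenvalues i = 0 :=
      (Finset.sum_eq_zero_iff_of_nonneg (fun i _ => hA.eigenvalues_nonneg i)).mp hsum
    have : A = hA.1.eigenvectorUnitary.1 * diagonal (RCLike.ofReal ∘ hA.1.eigenvalues)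
        * (star hA.1.eigenvectorUnitary.1) := hA.1.spectral_theorem
    rw [this]
    have hd : diagonal (RCLike.ofReal ∘ hA.1.eigenvalues) = (0 : Matrix (Fin n) (Fin n) ℝ) := by
      ext i j
      by_cases hij : i = j <;> simp [Matrix.diagonal, hij, hz j (Finset.mem_univ j)]
    rw [hd, Matrix.mul_zero, Matrix.zero_mul]

lemma det_one_sub_eq_prod {A : Matrix (Fin n) (Fin n) ℝ} (hA : A.IsHermitian) :
    (1 - A).det = ∏ i, (1 - hA.eigenvalues i) := by
  have hU := Unitary.coe_star_mul_self hA.eigenvectorUnitary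
  have hU' : hA.eigenvectorUnitary.1 * star hA.eigenvectorUnitary.1 = 1 :=
    (Matrix.mem_unitaryGroup_iff).mp hA.eigenvectorUnitary.2
  have h1 : (1 : Matrix (Fin n) (Fin n) ℝ) - A
      = hA.eigenvectorUnitary.1 * (1 - diagonal (RCLike.ofReal ∘ hA.eigenvalues))
        * (star hA.eigenvectorUnitary.1) := by
    rw [Matrix.mul_sub, Matrix.sub_mul, Matrix.mul_one, hU', ← (show A = hA.eigenvectorUnitary.1 * diagonal (RCLike.ofReal ∘ hA.eigenvalues) * star hA.eigenvectorUnitary.1 from hA.spectral_theorem)]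
  rw [h1, Matrix.det_mul, Matrix.det_mul, mul_comm, ← mul_assoc, ← Matrix.det_mul, hU,
    Matrix.det_one, one_mul]
  have h2 : (1 : Matrix (Fin n) (Fin n) ℝ) - diagonal (RCLike.ofReal ∘ hA.eigenvalues)
      = diagonal (fun i => 1 - hA.eigenvalues i) := by
    rw [← Matrix.diagonal_one, Matrix.diagonal_sub]
    rfl
  rw [h2, Matrix.det_diagonal]

lemma logdet_squeeze {A : Matrix (Fin n) (Fin n) ℝ} (hA : A.PosSemidef) {s : ℝ}
    (hs1 : s < 1) (hle : ∀ i, hA.1.eigenvalues i ≤ s) :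
    A.trace ≤ -Real.log (1 - A).det ∧ -Real.log (1 - A).det ≤ A.trace / (1 - s) := by
  have hμ0 := hA.eigenvalues_nonneg
  have hμ1 : ∀ i, 0 < 1 - hA.1.eigenvalues i := fun i => by
    have := hle i; linarith
  have hlog : Real.log (1 - A).det = ∑ i, Real.log (1 - hA.1.eigenvalues i) := by
    rw [det_one_sub_eq_prod hA.1]
    exact Real.log_prod fun i _ => (hμ1 i).ne'
  have hslt : 0 < 1 - s := by linarith
  constructor
  · rw [hlog, trace_eq_sum_eig hA.1, ← Finset.sum_neg_distrib]
    refine Finset.sum_le_sum fun i _ => ?_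
    have := Real.log_le_sub_one_of_pos (hμ1 i)
    linarith
  · rw [hlog, trace_eq_sum_eig hA.1, Finset.sum_div, ← Finset.sum_neg_distrib]
    refine Finset.sum_le_sum fun i _ => ?_
    have h1 : -Real.log (1 - hA.1.eigenvalues i)
        = Real.log (1 - hA.1.eigenvalues i)⁻¹ := (Real.log_inv _).symm
    have h2 := Real.log_le_sub_one_of_pos (inv_pos.mpr (hμ1 i))
    have h3 : (1 - hA.1.eigenvalues i)⁻¹ - 1
        = hA.1.eigenvalues i / (1 - hA.1.eigenvalues i) := by
      field_simp [(hμ1 i).ne']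
      ring
    have h4 : hA.1.eigenvalues i / (1 - hA.1.eigenvalues i)
        ≤ hA.1.eigenvalues i / (1 - s) :=
      div_le_div_of_nonneg_left (hμ0 i) hslt (by have := hle i; linarith) |>.trans_eq rfl
    rw [h1]
    calc Real.log (1 - hA.1.eigenvalues i)⁻¹ ≤ (1 - hA.1.eigenvalues i)⁻¹ - 1 := h2
    _ = hA.1.eigenvalues i / (1 - hA.1.eigenvalues i) := h3
    _ ≤ _ := h4

lemma star_u_mul {A : Matrix (Fin n) (Fin n) ℝ} (hA : A.IsHermitian) :
    star hA.eigenvectorUnitary.1 * A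
      = diagonal (RCLike.ofReal ∘ hA.eigenvalues) * star hA.eigenvectorUnitary.1 := by
  have hU' : hA.eigenvectorUnitary.1 * star hA.eigenvectorUnitary.1 = 1 :=
    (Matrix.mem_unitaryGroup_iff).mp hA.eigenvectorUnitary.2
  have h4 : star hA.eigenvectorUnitary.1 * A * hA.eigenvectorUnitary.1
      = diagonal (RCLike.ofReal ∘ hA.eigenvalues) := by
    have := hA.conjStarAlgAut_star_eigenvectorUnitary
    rwa [Unitary.conjStarAlgAut_apply, Unitary.coe_star, star_star] at this
  calc star hA.eigenvectorUnitary.1 * A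
      = star hA.eigenvectorUnitary.1 * A
        * (hA.eigenvectorUnitary.1 * star hA.eigenvectorUnitary.1) := by
        rw [hU', Matrix.mul_one]
    _ = (star hA.eigenvectorUnitary.1 * A * hA.eigenvectorUnitary.1)
        * star hA.eigenvectorUnitary.1 := by simp only [Matrix.mul_assoc]
    _ = _ := by rw [h4]

lemma inv_eq_spectral {A : Matrix (Fin n) (Fin n) ℝ} (hA : A.PosDef) :
    A⁻¹ = hA.1.eigenvectorUnitary.1 * diagonal (fun i => (hA.1.eigenvalues i)⁻¹)
      * star hA.1.eigenvectorUnitary.1 := by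
  have hcoe : (RCLike.ofReal ∘ hA.1.eigenvalues : Fin n → ℝ) = hA.1.eigenvalues := by
    ext i; simp
  have h5 := star_u_mul hA.1
  rw [hcoe] at h5
  apply Matrix.inv_eq_left_inv
  calc hA.1.eigenvectorUnitary.1 * diagonal (fun i => (hA.1.eigenvalues i)⁻¹)
        * star hA.1.eigenvectorUnitary.1 * A
      = hA.1.eigenvectorUnitary.1 * diagonal (fun i => (hA.1.eigenvalues i)⁻¹)
        * (star hA.1.eigenvectorUnitary.1 * A) := by simp only [Matrix.mul_assoc]
    _ = hA.1.eigenvectorUnitary.1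
        * (diagonal (fun i => (hA.1.eigenvalues i)⁻¹) * diagonal hA.1.eigenvalues)
        * star hA.1.eigenvectorUnitary.1 := by rw [h5]; simp only [Matrix.mul_assoc]
    _ = 1 := by
        rw [Matrix.diagonal_mul_diagonal]
        have h6 : (fun i => (hA.1.eigenvalues i)⁻¹ * hA.1.eigenvalues i) = fun _ => (1:ℝ) := by
          ext i; exact inv_mul_cancel₀ (hA.eigenvalues_pos i).ne'
        rw [h6, Matrix.diagonal_one, Matrix.mul_one]
        exact (Matrix.mem_unitaryGroup_iff).mp hA.1.eigenvectorUnitary.2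

lemma conj_diag_psd {A : Matrix (Fin n) (Fin n) ℝ} (hA : A.PosDef) (d : Fin n → ℝ)
    (hd : ∀ i, 0 ≤ d i) :
    (hA.1.eigenvectorUnitary.1 * diagonal d * star hA.1.eigenvectorUnitary.1).PosSemidef := by
  have := (Matrix.posSemidef_diagonal_iff.mpr hd).mul_mul_conjTranspose_same
    hA.1.eigenvectorUnitary.1
  rwa [← Matrix.star_eq_conjTranspose] at this

lemma smul_one_conj {A : Matrix (Fin n) (Fin n) ℝ} (hA : A.PosDef) (c : ℝ) :
    c • (1 : Matrix (Fin n) (Fin n) ℝ)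
      = hA.1.eigenvectorUnitary.1 * diagonal (fun _ => c) * star hA.1.eigenvectorUnitary.1 := by
  have hU' : hA.1.eigenvectorUnitary.1 * star hA.1.eigenvectorUnitary.1 = 1 :=
    (Matrix.mem_unitaryGroup_iff).mp hA.1.eigenvectorUnitary.2
  rw [Matrix.smul_one_eq_diagonal]
  calc diagonal (fun _ : Fin n => c)
      = (c • (1 : Matrix (Fin n) (Fin n) ℝ)) := (Matrix.smul_one_eq_diagonal c).symm
    _ = c • (hA.1.eigenvectorUnitary.1 * star hA.1.eigenvectorUnitary.1) := by rw [hU']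
    _ = hA.1.eigenvectorUnitary.1 * (c • (1 : Matrix (Fin n) (Fin n) ℝ))
        * star hA.1.eigenvectorUnitary.1 := by
        rw [Matrix.mul_smul, Matrix.smul_mul, Matrix.mul_one]
    _ = _ := by rw [Matrix.smul_one_eq_diagonal]

lemma diag_sub_diag (d₁ d₂ : Fin n → ℝ) :
    diagonal d₁ - diagonal d₂ = diagonal (fun i => d₁ i - d₂ i) := by
  ext i j
  by_cases h : i = j <;> simp [Matrix.diagonal_apply, h]

lemma inv_sub_smul_psd {A : Matrix (Fin n) (Fin n) ℝ} (hA : A.PosDef) {c : ℝ}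
    (hc : ∀ i, c ≤ (hA.1.eigenvalues i)⁻¹) :
    (A⁻¹ - c • (1 : Matrix (Fin n) (Fin n) ℝ)).PosSemidef := by
  rw [inv_eq_spectral hA, smul_one_conj hA c, ← Matrix.sub_mul, ← Matrix.mul_sub,
    diag_sub_diag]
  exact conj_diag_psd hA _ fun i => by have := hc i; linarith

lemma smul_sub_inv_psd {A : Matrix (Fin n) (Fin n) ℝ} (hA : A.PosDef) {c : ℝ}
    (hc : ∀ i, (hA.1.eigenvalues i)⁻¹ ≤ c) :
    (c • (1 : Matrix (Fin n) (Fin n) ℝ) - A⁻¹).PosSemidef := by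
  rw [inv_eq_spectral hA, smul_one_conj hA c, ← Matrix.sub_mul, ← Matrix.mul_sub,
    diag_sub_diag]
  exact conj_diag_psd hA _ fun i => by have := hc i; linarith

lemma trace_inv_mul_bounds {S0 : Matrix (Fin n) (Fin n) ℝ} (hS0 : S0.PosDef)
    {lmin lmax : ℝ} (hlmin : 0 < lmin) (hlmax : 0 < lmax)
    (heig : ∀ i, lmin ≤ hS0.isHermitian.eigenvalues i ∧ hS0.isHermitian.eigenvalues i ≤ lmax)
    {D : Matrix (Fin n) (Fin n) ℝ} (hD : D.PosSemidef) :
    D.trace / lmax ≤ (S0⁻¹ * D).trace ∧ (S0⁻¹ * D).trace ≤ D.trace / lmin := by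
  have key : ∀ c : ℝ, ((S0⁻¹ - c • (1 : Matrix (Fin n) (Fin n) ℝ)) * D).trace
      = (S0⁻¹ * D).trace - c * D.trace := by
    intro c
    rw [Matrix.sub_mul, Matrix.trace_sub, Matrix.smul_mul, Matrix.one_mul, Matrix.trace_smul]
    rfl
  have key2 : ∀ c : ℝ, ((c • (1 : Matrix (Fin n) (Fin n) ℝ) - S0⁻¹) * D).trace
      = c * D.trace - (S0⁻¹ * D).trace := by
    intro c
    rw [Matrix.sub_mul, Matrix.trace_sub, Matrix.smul_mul, Matrix.one_mul, Matrix.trace_smul]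
    rfl
  constructor
  · have h1 : (S0⁻¹ - lmax⁻¹ • (1 : Matrix (Fin n) (Fin n) ℝ)).PosSemidef :=
      inv_sub_smul_psd hS0 fun i =>
        inv_anti₀ (hS0.eigenvalues_pos i) (heig i).2 |>.trans_eq rfl
    have h2 := trace_mul_psd_nonneg h1 hD
    rw [key] at h2
    rw [div_eq_inv_mul]
    linarith
  · have h1 : (lmin⁻¹ • (1 : Matrix (Fin n) (Fin n) ℝ) - S0⁻¹).PosSemidef :=
      smul_sub_inv_psd hS0 fun i => inv_anti₀ hlmin (heig i).1
    have h2 := trace_mul_psd_nonneg h1 hD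
    rw [key2] at h2
    rw [div_eq_inv_mul]
    linarith


/-- **Local asymptotic relationship between MI and IMSPE** (Theorem 1).
If `Σ₀` is symmetric positive definite with all eigenvalues in `[λmin, λmax]`,
`(Δ_k)` are nonzero symmetric positive semidefinite matrices with `Σ₀ - Δ_k`
positive definite, `‖Σ₀^{-1/2} Δ_k Σ₀^{-1/2}‖₂ → 0`, and
`tr(Σ₀⁻¹ Δ_k)/tr(Δ_k) → ρ`, then the ratio of the mutual-information utility
`U_k = ½(log det Σ₀ − log det(Σ₀ − Δ_k))` to `ΔIMSPE_k = tr(Δ_k)/n` converges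
to `C = (n/2)·ρ`, and `n/(2 λmax) ≤ C ≤ n/(2 λmin)`. -/
theorem mi_imspe_local_asymptotic_relationship
    {n : ℕ} (hn : 1 ≤ n)
    (S0 : Matrix (Fin n) (Fin n) ℝ) (hS0 : S0.PosDef)
    (lmin lmax : ℝ) (hlmin : 0 < lmin) (hminmax : lmin ≤ lmax)
    (heig : ∀ i, lmin ≤ hS0.isHermitian.eigenvalues i ∧
      hS0.isHermitian.eigenvalues i ≤ lmax)
    (Δ : ℕ → Matrix (Fin n) (Fin n) ℝ)
    (hΔne : ∀ k, Δ k ≠ 0)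
    (hΔpsd : ∀ k, (Δ k).PosSemidef)
    (hpd : ∀ k, (S0 - Δ k).PosDef)
    (hnorm : Tendsto
      (fun k => specNorm ((Matrix.PosSemidef.sqrt hS0.posSemidef)⁻¹ * Δ k * (Matrix.PosSemidef.sqrt hS0.posSemidef)⁻¹))
      atTop (nhds 0))
    (ρ : ℝ)
    (hratio : Tendsto (fun k => (S0⁻¹ * Δ k).trace / (Δ k).trace) atTop (nhds ρ)) :
    Tendsto
      (fun k => ((1 / 2) * (Real.log S0.det - Real.log (S0 - Δ k).det))
        / ((Δ k).trace / (n : ℝ)))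
      atTop (nhds (((n : ℝ) / 2) * ρ)) ∧
    (n : ℝ) / (2 * lmax) ≤ ((n : ℝ) / 2) * ρ ∧
    ((n : ℝ) / 2) * ρ ≤ (n : ℝ) / (2 * lmin) := by
  have hlmax : 0 < lmax := hlmin.trans_le hminmax
  set Q := hS0.posSemidef.sqrt with hQdef
  have hQpsd : Q.PosSemidef := hS0.posSemidef.posSemidef_sqrt
  have hQQ : Q * Q = S0 := hS0.posSemidef.sqrt_mul_self
  have hdetS0 : 0 < S0.det := hS0.det_pos
  have hQdet : Q.det * Q.det = S0.det := by rw [← Matrix.det_mul, hQQ]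
  have hQdet0 : IsUnit Q.det := by
    refine isUnit_iff_ne_zero.mpr fun h => ?_
    rw [h, mul_zero] at hQdet
    exact hdetS0.ne' hQdet.symm
  have hQR : Q * Q⁻¹ = 1 := Matrix.mul_nonsing_inv _ hQdet0
  have hRQ : Q⁻¹ * Q = 1 := Matrix.nonsing_inv_mul _ hQdet0
  have hRh : Q⁻¹.IsHermitian := hQpsd.1.inv
  have hRR : Q⁻¹ * Q⁻¹ = S0⁻¹ := by rw [← hQQ, Matrix.mul_inv_rev]
  set E : ℕ → Matrix (Fin n) (Fin n) ℝ := fun k => Q⁻¹ * Δ k * Q⁻¹ with hEdef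
  have hEpsd : ∀ k, (E k).PosSemidef := fun k => by
    have := (hΔpsd k).conjTranspose_mul_mul_same Q⁻¹
    rwa [show (Q⁻¹)ᴴ = Q⁻¹ from hRh] at this
  have hQSQ : Q⁻¹ * S0 * Q⁻¹ = 1 := by
    calc Q⁻¹ * S0 * Q⁻¹ = (Q⁻¹ * Q) * (Q * Q⁻¹) := by
          rw [← hQQ]; simp only [Matrix.mul_assoc]
      _ = 1 := by rw [hRQ, hQR, Matrix.one_mul]
  have hone : ∀ k, (1 : Matrix (Fin n) (Fin n) ℝ) - E k = Q⁻¹ * (S0 - Δ k) * Q⁻¹ := fun k => by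
    rw [Matrix.mul_sub, Matrix.sub_mul, hQSQ, hEdef]
  have htE : ∀ k, (E k).trace = (S0⁻¹ * Δ k).trace := fun k => by
    rw [hEdef]
    simp only
    rw [Matrix.trace_mul_cycle, hRR]
  have hdetinv : Q⁻¹.det * Q.det = 1 := Matrix.det_nonsing_inv_mul_det _ hQdet0
  have hdet1E : ∀ k, (S0 - Δ k).det = S0.det * (1 - E k).det := fun k => by
    rw [hone k, Matrix.det_mul, Matrix.det_mul, ← hQdet]
    have h9 : Q.det * Q.det * (Q⁻¹.det * (S0 - Δ k).det * Q⁻¹.det)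
        = (Q⁻¹.det * Q.det) * (Q⁻¹.det * Q.det) * (S0 - Δ k).det := by ring
    rw [h9, hdetinv, one_mul, one_mul]
  have hdet1Epos : ∀ k, 0 < (1 - E k).det := fun k => by
    have h1 := (hpd k).det_pos
    rw [hdet1E k] at h1
    by_contra h
    push_neg at h
    nlinarith
  have hflog : ∀ k, Real.log S0.det - Real.log (S0 - Δ k).det = -Real.log (1 - E k).det :=
    fun k => by
      rw [hdet1E k, Real.log_mul hdetS0.ne' (hdet1Epos k).ne']
      ring
  -- trace facts
  have hΔtr : ∀ k, 0 < (Δ k).trace := fun k => trace_pos_of_ne_zero (hΔpsd k) (hΔne k)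
  have hbounds : ∀ k, (Δ k).trace / lmax ≤ (S0⁻¹ * Δ k).trace ∧
      (S0⁻¹ * Δ k).trace ≤ (Δ k).trace / lmin :=
    fun k => trace_inv_mul_bounds hS0 hlmin hlmax heig (hΔpsd k)
  have htpos : ∀ k, 0 < (E k).trace := fun k => by
    rw [htE k]
    exact lt_of_lt_of_le (div_pos (hΔtr k) hlmax) (hbounds k).1
  -- spectral norm facts
  have heigE : ∀ k i, (hEpsd k).1.eigenvalues i ≤ specNorm (E k) := fun k i =>
    (le_abs_self _).trans (eig_le_specNorm (hEpsd k).1 i)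
  have hsmall : ∀ᶠ k in atTop, specNorm (E k) < 1/2 :=
    hnorm.eventually_lt_const (by norm_num)
  -- squeeze
  set f : ℕ → ℝ := fun k => -Real.log (1 - E k).det with hfdef
  set fR : ℕ → ℝ := fun k => f k / (E k).trace with hfRdef
  have hlow : ∀ᶠ k in atTop, 1 ≤ fR k := by
    filter_upwards [hsmall] with k hk
    have h1 := (logdet_squeeze (hEpsd k) (by norm_num : (1:ℝ)/2 < 1)
      (fun i => (heigE k i).trans hk.le)).1
    exact (one_le_div (htpos k)).mpr h1
  have hup : ∀ᶠ k in atTop, fR k ≤ (1 - specNorm (E k))⁻¹ := by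
    filter_upwards [hsmall] with k hk
    have h1 := (logdet_squeeze (hEpsd k) (lt_of_le_of_lt hk.le (by norm_num))
      (fun i => heigE k i)).2
    have hs1 : 0 < 1 - specNorm (E k) := by linarith
    rw [hfRdef]
    simp only
    rw [div_le_iff₀ (htpos k)]
    calc f k ≤ (E k).trace / (1 - specNorm (E k)) := h1
      _ = (1 - specNorm (E k))⁻¹ * (E k).trace := by rw [div_eq_inv_mul]
  have hupT : Tendsto (fun k => (1 - specNorm (E k))⁻¹) atTop (nhds 1) := by
    have h1 : Tendsto (fun k => 1 - specNorm (E k)) atTop (nhds 1) := by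
      have h0 : Tendsto (fun k => (1:ℝ) - specNorm (E k)) atTop (nhds (1 - 0)) :=
        tendsto_const_nhds.sub hnorm
      rwa [sub_zero] at h0
    have h2 := h1.inv₀ (by norm_num)
    simpa using h2
  have hfRT : Tendsto fR atTop (nhds 1) :=
    tendsto_of_tendsto_of_tendsto_of_le_of_le' tendsto_const_nhds hupT hlow hup
  have hratio' : Tendsto (fun k => (E k).trace / (Δ k).trace) atTop (nhds ρ) :=
    hratio.congr fun k => by rw [htE k]
  have hmainT : Tendsto (fun k => ((n : ℝ)/2) * fR k * ((E k).trace / (Δ k).trace))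
      atTop (nhds (((n : ℝ)/2) * 1 * ρ)) :=
    (tendsto_const_nhds.mul hfRT).mul hratio'
  rw [mul_one] at hmainT
  have hn0 : (n : ℝ) ≠ 0 := Nat.cast_ne_zero.mpr (by omega)
  constructor
  · refine hmainT.congr fun k => ?_
    rw [hfRdef, hfdef]
    simp only
    rw [hflog k]
    have ht := (htpos k).ne'
    have htr := (hΔtr k).ne'
    field_simp
  · have hub : ∀ k, (S0⁻¹ * Δ k).trace / (Δ k).trace ≤ lmin⁻¹ := fun k => by
      rw [div_le_iff₀ (hΔtr k)]
      calc (S0⁻¹ * Δ k).trace ≤ (Δ k).trace / lmin := (hbounds k).2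
        _ = lmin⁻¹ * (Δ k).trace := by rw [div_eq_inv_mul]
    have hlb : ∀ k, lmax⁻¹ ≤ (S0⁻¹ * Δ k).trace / (Δ k).trace := fun k => by
      rw [le_div_iff₀ (hΔtr k)]
      calc lmax⁻¹ * (Δ k).trace = (Δ k).trace / lmax := by rw [div_eq_inv_mul]
        _ ≤ (S0⁻¹ * Δ k).trace := (hbounds k).1
    have hρub : ρ ≤ lmin⁻¹ := le_of_tendsto' hratio hub
    have hρlb : lmax⁻¹ ≤ ρ := ge_of_tendsto' hratio hlb
    constructor
    · have : (n : ℝ) / (2 * lmax) = ((n : ℝ)/2) * lmax⁻¹ := by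
        field_simp
      rw [this]
      exact mul_le_mul_of_nonneg_left hρlb (by positivity)
    · have : (n : ℝ) / (2 * lmin) = ((n : ℝ)/2) * lmin⁻¹ := by
        field_simp
      rw [this]
      exact mul_le_mul_of_nonneg_left hρub (by positivity)
end

section
/- Let B be a real symmetric positive semidefinite n×n matrix with spectral norm ‖B‖₂ < 1/2. Then I − B is positive definite and | −(1/2) log det(I − B) − (1/2) tr(B) | ≤ (1/2) ‖B‖_F², where ‖B‖_F denotes the Frobenius norm. -/
open Matrix
open scoped RealInnerProductSpace

/-- The Frobenius norm of a real square matrix. -/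
noncomputable def frobNorm {n : ℕ} (B : Matrix (Fin n) (Fin n) ℝ) : ℝ :=
  Real.sqrt (∑ i, ∑ j, (B i j) ^ 2)

section aux
variable {n : ℕ} (B : Matrix (Fin n) (Fin n) ℝ)

-- norm bound on toEuclideanLin image
lemma norm_toEuclideanLin_le (v : EuclideanSpace ℝ (Fin n)) :
    ‖Matrix.toEuclideanLin B v‖ ≤ specNorm B * ‖v‖ := by
  have h := ((Matrix.toEuclideanLin B).toContinuousLinearMap).le_opNorm v
  rw [specNorm]
  simpa only [LinearMap.coe_toContinuousLinearMap'] using h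

lemma eigenvalue_le_specNorm (hH : B.IsHermitian) (i : Fin n) :
    |hH.eigenvalues i| ≤ specNorm B := by
  set w : EuclideanSpace ℝ (Fin n) := hH.eigenvectorBasis i with hw
  have hwnorm : ‖w‖ = 1 := hH.eigenvectorBasis.orthonormal.1 i
  have hb := hH.mulVec_eigenvectorBasis i
  have h1 : (Matrix.toEuclideanLin B) w = hH.eigenvalues i • w := by
    apply PiLp.ext
    intro j
    have := congrFun hb j
    simpa [Matrix.toEuclideanLin_apply] using this
  have h2 := norm_toEuclideanLin_le B w
  rw [h1, norm_smul, hwnorm] at h2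
  simpa using h2

end aux

lemma log_one_sub_key {x : ℝ} (h0 : 0 ≤ x) (h1 : x < 1/2) :
    -Real.log (1 - x) - x ≤ x ^ 2 := by
  have hmono : MonotoneOn (fun y : ℝ => Real.log (1 - y) + y + y ^ 2)
      (Set.Icc 0 (1/2 : ℝ)) := by
    have hint : interior (Set.Icc (0:ℝ) (1/2)) = Set.Ioo 0 (1/2) := interior_Icc
    have hd : ∀ y ∈ Set.Ioo (0:ℝ) (1/2),
        HasDerivAt (fun y : ℝ => Real.log (1 - y) + y + y ^ 2)
          ((1 - y)⁻¹ * (-1) + 1 + 2 * y) y := by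
      intro y hy
      have hne : (1:ℝ) - y ≠ 0 := by have := hy.2; intro h; rw [sub_eq_zero] at h; linarith
      have h1' : HasDerivAt (fun y : ℝ => 1 - y) (-1) y := (hasDerivAt_id y).const_sub 1
      have h2 := (Real.hasDerivAt_log hne).comp y h1'
      have h3 : HasDerivAt (fun y : ℝ => y ^ 2) (2 * y) y := by
        simpa using hasDerivAt_pow 2 y
      exact (h2.add (hasDerivAt_id y)).add h3
    apply monotoneOn_of_deriv_nonneg (convex_Icc _ _)
    · apply ContinuousOn.add
      apply ContinuousOn.add
      · apply ContinuousOn.log (continuous_const.sub continuous_id).continuousOn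
        intro y hy
        have := hy.2
        intro h; simp only [Pi.sub_apply, id, sub_eq_zero] at h
        simp only [Set.mem_Icc, id] at hy h
        linarith [hy.2]
      · exact continuousOn_id
      · exact (continuous_pow 2).continuousOn
    · rw [hint]
      exact fun y hy => (hd y hy).differentiableAt.differentiableWithinAt
    · rw [hint]
      intro y hy
      rw [(hd y hy).deriv]
      have hy1 : 0 < y := hy.1
      have hy2 : y < 1/2 := hy.2
      have hpos : (0:ℝ) < 1 - y := by linarith
      have hinv : (1 - y)⁻¹ * (1 - y) = 1 := inv_mul_cancel₀ (by linarith)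
      nlinarith [inv_pos.2 hpos]
  have h00 : (0:ℝ) ∈ Set.Icc (0:ℝ) (1/2) := by constructor <;> norm_num
  have hxx : x ∈ Set.Icc (0:ℝ) (1/2) := ⟨h0, le_of_lt h1⟩
  have := hmono h00 hxx h0
  simp only [sub_zero, Real.log_one] at this
  nlinarith [this]


/-- Second-order Taylor expansion of the log-determinant: if `B` is real symmetric
positive semidefinite with spectral norm `< 1/2`, then `I − B` is positive definite
and `| −½ log det(I − B) − ½ tr(B) | ≤ ½ ‖B‖_F²`. -/
theorem neg_half_log_det_sub_half_trace_abs_le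
    {n : ℕ} (B : Matrix (Fin n) (Fin n) ℝ)
    (hB : B.PosSemidef) (hnorm : specNorm B < 1 / 2) :
    ((1 : Matrix (Fin n) (Fin n) ℝ) - B).PosDef ∧
    |(-(1 / 2)) * Real.log ((1 : Matrix (Fin n) (Fin n) ℝ) - B).det
        - (1 / 2) * B.trace| ≤ (1 / 2) * (frobNorm B) ^ 2 := by
  classical
  have hH : B.IsHermitian := hB.1
  set μ : Fin n → ℝ := hH.eigenvalues with hμ
  have hμ0 : ∀ i, 0 ≤ μ i := hB.eigenvalues_nonneg
  have hμs : ∀ i, μ i < 1/2 := by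
    intro i
    have := eigenvalue_le_specNorm B hH i
    rw [abs_of_nonneg (hμ0 i)] at this
    linarith
  -- unitary diagonalization
  have hUU : (hH.eigenvectorUnitary : Matrix (Fin n) (Fin n) ℝ) *
      star (hH.eigenvectorUnitary : Matrix (Fin n) (Fin n) ℝ) = 1 :=
    (Matrix.mem_unitaryGroup_iff).mp hH.eigenvectorUnitary.2
  have hUU' : star (hH.eigenvectorUnitary : Matrix (Fin n) (Fin n) ℝ) *
      (hH.eigenvectorUnitary : Matrix (Fin n) (Fin n) ℝ) = 1 :=
    (Matrix.mem_unitaryGroup_iff').mp hH.eigenvectorUnitary.2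
  have hDμ : Matrix.diagonal (RCLike.ofReal ∘ μ) = Matrix.diagonal μ := by
    ext i j; simp [Matrix.diagonal]
  have hspec : B = (hH.eigenvectorUnitary : Matrix (Fin n) (Fin n) ℝ) *
      Matrix.diagonal μ * star (hH.eigenvectorUnitary : Matrix (Fin n) (Fin n) ℝ) := by
    conv_lhs => rw [hH.spectral_theorem]
    rw [hDμ]
    rfl
  set U : Matrix (Fin n) (Fin n) ℝ := (hH.eigenvectorUnitary : Matrix (Fin n) (Fin n) ℝ) with hUdef
  -- trace
  have htr : B.trace = ∑ i, μ i := by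
    conv_lhs => rw [hspec]
    rw [Matrix.trace_mul_cycle, hUU', Matrix.one_mul, Matrix.trace_diagonal]
  -- determinant
  have hone : (1 : Matrix (Fin n) (Fin n) ℝ) - B = U * (1 - Matrix.diagonal μ) * star U := by
    rw [Matrix.mul_sub, Matrix.sub_mul, Matrix.mul_one, hUU, ← hspec]
  have hdet : ((1 : Matrix (Fin n) (Fin n) ℝ) - B).det = ∏ i, (1 - μ i) := by
    rw [hone, Matrix.det_mul, Matrix.det_mul]
    have : U.det * (1 - Matrix.diagonal μ).det * (star U).det
        = (1 - Matrix.diagonal μ).det * (U * star U).det := by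
      rw [Matrix.det_mul]; ring
    rw [this, hUU, Matrix.det_one, mul_one]
    have hdd : (1 : Matrix (Fin n) (Fin n) ℝ) - Matrix.diagonal μ
        = Matrix.diagonal (fun i => 1 - μ i) := by
      ext i j
      by_cases h : i = j <;> simp [Matrix.diagonal, Matrix.one_apply, h]
    rw [hdd, Matrix.det_diagonal]
  -- frobenius
  have hsymm : ∀ i j, B j i = B i j := by
    intro i j
    conv_lhs => rw [← hH]
    simp [Matrix.conjTranspose_apply]
  have hBB : (B * B).trace = ∑ i, (μ i) ^ 2 := by
    conv_lhs => rw [hspec]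
    rw [show U * Matrix.diagonal μ * star U * (U * Matrix.diagonal μ * star U)
        = U * (Matrix.diagonal μ * (star U * U) * Matrix.diagonal μ) * star U by
      simp only [Matrix.mul_assoc]]
    rw [hUU', Matrix.mul_one, Matrix.diagonal_mul_diagonal]
    rw [Matrix.trace_mul_cycle, hUU', Matrix.one_mul, Matrix.trace_diagonal]
    simp [sq]
  have hfro : (frobNorm B) ^ 2 = ∑ i, (μ i) ^ 2 := by
    rw [frobNorm, Real.sq_sqrt (by positivity)]
    rw [← hBB]
    rw [Matrix.trace]
    congr 1
    ext i
    simp only [Matrix.diag_apply, Matrix.mul_apply]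
    congr 1
    ext j
    rw [hsymm j i, sq]
  -- PosDef
  have hpd : ((1 : Matrix (Fin n) (Fin n) ℝ) - B).PosDef := by
    rw [Matrix.posDef_iff_dotProduct_mulVec]
    refine ⟨Matrix.isHermitian_one.sub hH, ?_⟩
    intro x hx
    set v : EuclideanSpace ℝ (Fin n) := (WithLp.equiv 2 (Fin n → ℝ)).symm x with hv
    have e1 : x ⬝ᵥ (B *ᵥ x) = ⟪v, Matrix.toEuclideanLin B v⟫ := by
      rw [Matrix.toEuclideanLin_apply]
      show x ⬝ᵥ B *ᵥ x = (B *ᵥ x) ⬝ᵥ star x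
      rw [star_trivial, dotProduct_comm]
    have e2 : x ⬝ᵥ x = ‖v‖ ^ 2 := by
      rw [← real_inner_self_eq_norm_sq, hv]
      show x ⬝ᵥ x = x ⬝ᵥ star x
      rw [star_trivial]
    have hinner : ⟪v, Matrix.toEuclideanLin B v⟫ ≤ ‖v‖ * ‖Matrix.toEuclideanLin B v‖ :=
      real_inner_le_norm _ _
    have hle := norm_toEuclideanLin_le B v
    have hvne : v ≠ 0 := by
      intro h
      apply hx
      have := congrArg (WithLp.equiv 2 (Fin n → ℝ)) h
      simpa [hv] using this
    have hvpos : 0 < ‖v‖ := norm_pos_iff.mpr hvne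
    rw [Matrix.sub_mulVec, Matrix.one_mulVec, dotProduct_sub, star_trivial]
    have hx2 : x ⬝ᵥ (B *ᵥ x) ≤ specNorm B * ‖v‖ ^ 2 := by
      rw [e1]
      calc ⟪v, Matrix.toEuclideanLin B v⟫ ≤ ‖v‖ * ‖Matrix.toEuclideanLin B v‖ := hinner
        _ ≤ ‖v‖ * (specNorm B * ‖v‖) := by
            apply mul_le_mul_of_nonneg_left hle (norm_nonneg _)
        _ = specNorm B * ‖v‖ ^ 2 := by ring
    rw [e2]
    nlinarith [sq_nonneg ‖v‖, mul_pos hvpos hvpos]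
  refine ⟨hpd, ?_⟩
  -- log inequality
  have hμ1 : ∀ i, (0:ℝ) < 1 - μ i := fun i => by linarith [hμs i]
  have hlog : Real.log ((1 : Matrix (Fin n) (Fin n) ℝ) - B).det
      = ∑ i, Real.log (1 - μ i) := by
    rw [hdet, Real.log_prod (fun i _ => ne_of_gt (hμ1 i))]
  rw [hlog, htr, hfro]
  set T : ℝ := ∑ i, (-Real.log (1 - μ i) - μ i) with hT
  have hTeq : (-(1/2)) * (∑ i, Real.log (1 - μ i)) - (1/2) * (∑ i, μ i) = (1/2) * T := by
    rw [hT, Finset.sum_sub_distrib, Finset.sum_neg_distrib]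
    ring
  have hT0 : 0 ≤ T := by
    apply Finset.sum_nonneg
    intro i _
    have := Real.log_le_sub_one_of_pos (hμ1 i)
    linarith
  have hTle : T ≤ ∑ i, (μ i) ^ 2 := by
    apply Finset.sum_le_sum
    intro i _
    exact log_one_sub_key (hμ0 i) (hμs i)
  rw [hTeq, abs_of_nonneg (by linarith)]
  linarith
end
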